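/- Let m = nq + r where q ≥ 1 and 0 < r < n, and assume n > 2r + rq. Let l be the smallest nonnegative integer that satisfies at least one of the inequalities (1) q·l² + 2lr − rn ≥ 0 and (2) q·l² + l(2r + q) + r − rn ≥ 0. If this l satisfies both (1) and (2), then L(m,n) = qn + 2l; that is, every A ∈ D(m,n) satisfies tdet A ≥ qn + 2l, and there exists A ∈ D(m,n) with tdet A = qn + 2l. -/

import Mathlib

/-- D(m,n): n×n matrices with nonnegative integer entries, all row and column sums equal m. -/
def IsDSM (m n : ℕ) (A : Fin n → Fin n → ℕ) : Prop :=
  (∀ i, ∑ j, A i j = m) ∧ (∀ j, ∑ i, A i j = m)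

/-- tdet A: maximum of a transversal sum over all permutations. -/
def tdet {n : ℕ} (A : Fin n → Fin n → ℕ) : ℕ :=
  Finset.univ.sup fun σ : Equiv.Perm (Fin n) => ∑ i, A i (σ i)

open Finset
set_option maxHeartbeats 1000000


lemma sum_shift {M : Type*} [AddCommMonoid M] (l : ℕ) (hl : 0 < l) (f : ℕ → M) (c : ℕ) :
    ∑ j ∈ Finset.range l, f ((j + c) % l) = ∑ j ∈ Finset.range l, f j := by
  obtain ⟨l', rfl⟩ : ∃ l', l = l' + 1 := ⟨l - 1, by omega⟩
  rw [← Fin.sum_univ_eq_sum_range, ← Fin.sum_univ_eq_sum_range]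
  have key : ∀ j : Fin (l' + 1), f (((j : ℕ) + c) % (l' + 1)) =
      (fun x : Fin (l' + 1) => f (x : ℕ)) (j + (Fin.ofNat (l' + 1) c)) := by
    intro j
    congr 1
    rw [Fin.add_def]
    simp [Fin.val_ofNat, Nat.add_mod]
  rw [Finset.sum_congr rfl fun j _ => key j]
  exact Equiv.sum_comp (Equiv.addRight (Fin.ofNat (l' + 1) c)) (fun x : Fin (l' + 1) => f (x : ℕ))

lemma sum_shift_indicator (l m c : ℕ) (hl : 0 < l) (hm : m ≤ l) :
    (∑ j ∈ Finset.range l, if (j + c) % l < m then 1 else 0) = m := by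
  rw [sum_shift l hl (fun x => if x < m then 1 else 0) c, Finset.sum_boole]
  have : (Finset.range l).filter (fun j => j < m) = Finset.range m := by
    ext x; simp only [Finset.mem_filter, Finset.mem_range]; omega
  rw [this, Finset.card_range]
  simp

-- L2: counting residues below M
lemma count_res (l : ℕ) (hl : 0 < l) (x : ℕ) (hx : x < l) : ∀ M : ℕ,
    (∑ d ∈ Finset.range M, if d % l = x then 1 else 0)
      = M / l + if x < M % l then 1 else 0 := by
  intro M
  induction M with
  | zero => simp
  | succ M ih =>
    rw [Finset.sum_range_succ, ih]
    rcases Nat.lt_or_ge (M % l + 1) l with hcase | hcase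
    · have h1 : (M + 1) / l = M / l := by
        conv_lhs => rw [show M + 1 = l * (M / l) + (M % l + 1) by have := Nat.div_add_mod M l; omega]
        rw [Nat.mul_add_div hl, Nat.div_eq_of_lt hcase, Nat.add_zero]
      have h2 : (M + 1) % l = M % l + 1 := by
        conv_lhs => rw [show M + 1 = l * (M / l) + (M % l + 1) by have := Nat.div_add_mod M l; omega]
        rw [Nat.mul_add_mod, Nat.mod_eq_of_lt hcase]
      rw [h1, h2]
      split_ifs <;> omega
    · have hMl : M % l + 1 = l := by have := Nat.mod_lt M hl; omega
      have h1 : (M + 1) / l = M / l + 1 := by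
        conv_lhs => rw [show M + 1 = l * (M / l) + l by have := Nat.div_add_mod M l; omega]
        rw [Nat.mul_add_div hl, Nat.div_self hl]
      have h2 : (M + 1) % l = 0 := by
        conv_lhs => rw [show M + 1 = l * (M / l) + l by have := Nat.div_add_mod M l; omega]
        rw [Nat.mul_add_mod, Nat.mod_self]
      rw [h1, h2]
      split_ifs <;> omega

-- L3: interval indicator
lemma indicator_count (l : ℕ) (hl : 0 < l) (a m x : ℕ) (hm : m ≤ l) (hx : x < l) :
    (if (x + (l - a % l)) % l < m then 1 else 0)
      = ∑ d ∈ Finset.range m, if (a + d) % l = x then 1 else 0 := by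
  set e := (x + (l - a % l)) % l with he
  have hal : a % l < l := Nat.mod_lt a hl
  have hel : e < l := Nat.mod_lt _ hl
  have hdm : a / l * l + a % l = a := Nat.div_add_mod' a l
  have h1 : (a + e) % l = x := by
    rw [he, Nat.add_mod_mod,
      show a + (x + (l - a % l)) = x + a / l * l + l by omega,
      Nat.add_mod_right, Nat.add_mul_mod_self_right, Nat.mod_eq_of_lt hx]
  have huniq : ∀ d, d < l → (a + d) % l = x → d = e := by
    intro d hd hdx
    have : (a + d) % l = (a + e) % l := by rw [hdx, h1]
    have hme : d % l = e % l := by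
      have h3 := Nat.ModEq.add_left_cancel' a (this : (a + d) ≡ (a + e) [MOD l])
      exact h3
    rwa [Nat.mod_eq_of_lt hd, Nat.mod_eq_of_lt hel] at hme
  have hterm : ∀ d ∈ Finset.range m, (if (a + d) % l = x then 1 else 0)
      = if d = e then 1 else 0 := by
    intro d hd
    rw [Finset.mem_range] at hd
    by_cases hdx : (a + d) % l = x
    · rw [if_pos hdx, if_pos (huniq d (lt_of_lt_of_le hd hm) hdx)]
    · rw [if_neg hdx, if_neg]
      intro hde; subst hde; exact hdx h1
  rw [Finset.sum_congr rfl hterm, Finset.sum_ite_eq' (Finset.range m) e (fun _ => 1)]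
  simp [Finset.mem_range]

-- L4: partition of range into consecutive blocks
lemma sum_blocks {M : Type*} [AddCommMonoid M] (g : ℕ → ℕ) (f : ℕ → M) (k : ℕ) :
    ∑ i ∈ Finset.range k, ∑ d ∈ Finset.range (g i), f ((∑ i' ∈ Finset.range i, g i') + d)
      = ∑ s ∈ Finset.range (∑ i' ∈ Finset.range k, g i'), f s := by
  induction k with
  | zero => simp
  | succ k ih =>
    have key : ∀ a b : ℕ, ∑ s ∈ Finset.range (a + b), f s
        = ∑ s ∈ Finset.range a, f s + ∑ d ∈ Finset.range b, f (a + d) := by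
      intro a b
      induction b with
      | zero => simp
      | succ b ihb =>
        rw [show a + (b + 1) = (a + b) + 1 from rfl, Finset.sum_range_succ, ihb,
          Finset.sum_range_succ, add_assoc]
    rw [Finset.sum_range_succ, ih, Finset.sum_range_succ (fun i => g i), key]

-- residue shift inside equality indicator
lemma res_shift (l : ℕ) (hl : 0 < l) (ρ x s : ℕ) (hρ : ρ < l) (hx : x < l) :
    ((ρ + s) % l = x) ↔ (s % l = (x + (l - ρ)) % l) := by
  constructor
  · intro h
    calc s % l = (s + l) % l := (Nat.add_mod_right s l).symm
      _ = ((ρ + s) + (l - ρ)) % l := by rw [show s + l = (ρ + s) + (l - ρ) by omega]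
      _ = ((ρ + s) % l + (l - ρ)) % l := (Nat.mod_add_mod _ _ _).symm
      _ = (x + (l - ρ)) % l := by rw [h]
  · intro h
    calc (ρ + s) % l = (ρ + s % l) % l := (Nat.add_mod_mod _ _ _).symm
      _ = (ρ + (x + (l - ρ)) % l) % l := by rw [h]
      _ = (ρ + (x + (l - ρ))) % l := Nat.add_mod_mod _ _ _
      _ = (x + l) % l := by rw [show ρ + (x + (l - ρ)) = x + l by omega]
      _ = x := by rw [Nat.add_mod_right, Nat.mod_eq_of_lt hx]



lemma perm_le_tdet {n : ℕ} (A : Fin n → Fin n → ℕ) (σ : Equiv.Perm (Fin n)) :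
    ∑ i, A i (σ i) ≤ tdet A :=
  Finset.le_sup (f := fun σ : Equiv.Perm (Fin n) => ∑ i, A i (σ i)) (mem_univ σ)

lemma weak_duality {n : ℕ} (A : Fin n → Fin n → ℕ) (u v : Fin n → ℤ)
    (h : ∀ i j, (A i j : ℤ) ≤ u i + v j) (σ : Equiv.Perm (Fin n)) :
    (∑ i, A i (σ i) : ℤ) ≤ ∑ i, u i + ∑ j, v j := by
  calc (∑ i, A i (σ i) : ℤ) ≤ ∑ i, (u i + v (σ i)) :=
        Finset.sum_le_sum fun i _ => h i (σ i)
    _ = ∑ i, u i + ∑ i, v (σ i) := Finset.sum_add_distrib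
    _ = ∑ i, u i + ∑ j, v j := by rw [Equiv.sum_comp σ v]

lemma exists_cover {n : ℕ} (A : Fin n → Fin n → ℕ) :
    ∃ u v : Fin n → ℤ, (∀ i j, (A i j : ℤ) ≤ u i + v j) ∧
      ∑ i, u i + ∑ j, v j ≤ (tdet A : ℤ) := by
  classical
  suffices key : ∀ k : ℕ, ∀ u v : Fin n → ℤ, (∀ i j, (A i j : ℤ) ≤ u i + v j) →
      ∑ i, u i + ∑ j, v j ≤ (tdet A : ℤ) + k →
      ∃ u' v' : Fin n → ℤ, (∀ i j, (A i j : ℤ) ≤ u' i + v' j) ∧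
        ∑ i, u' i + ∑ j, v' j ≤ (tdet A : ℤ) by
    set u : Fin n → ℤ := fun i => ∑ j, (A i j : ℤ)
    set v : Fin n → ℤ := fun _ => 0
    have hc : ∀ i j, (A i j : ℤ) ≤ u i + v j := by
      intro i j
      have : (A i j : ℤ) ≤ ∑ j, (A i j : ℤ) :=
        Finset.single_le_sum (f := fun j => (A i j : ℤ)) (fun _ _ => by positivity) (mem_univ j)
      simpa [u, v] using this
    set T := ∑ i, u i + ∑ j, v j
    have : T ≤ (tdet A : ℤ) + (T - tdet A).toNat := by
      have := Int.self_le_toNat (T - tdet A)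
      omega
    exact key _ u v hc this
  intro k
  induction k with
  | zero => intro u v hc hle; exact ⟨u, v, hc, by simpa using hle⟩
  | succ k ih =>
    intro u v hc hle
    set t : Fin n → Finset (Fin n) := fun i => univ.filter (fun j => (A i j : ℤ) = u i + v j)
      with ht
    by_cases hall : ∀ s : Finset (Fin n), #s ≤ #(s.biUnion t)
    · obtain ⟨f, hfinj, hft⟩ := (Finset.all_card_le_biUnion_card_iff_exists_injective t).mp hall
      have hbij : Function.Bijective f := Finite.injective_iff_bijective.mp hfinj
      let σ : Equiv.Perm (Fin n) := Equiv.ofBijective f hbij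
      have htot : ∑ i, u i + ∑ j, v j = (∑ i, A i (σ i) : ℤ) := by
        have : ∀ i, (A i (σ i) : ℤ) = u i + v (σ i) := by
          intro i
          have := hft i
          rw [ht] at this
          simpa [σ, Equiv.ofBijective] using (Finset.mem_filter.mp this).2
        rw [Finset.sum_congr rfl fun i _ => this i, Finset.sum_add_distrib,
          Equiv.sum_comp σ v]
      refine ⟨u, v, hc, ?_⟩
      rw [htot]
      exact_mod_cast Nat.cast_le.mpr (perm_le_tdet A σ)
    · push_neg at hall
      obtain ⟨W, hW⟩ := hall
      set N := W.biUnion t with hN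
      set u' : Fin n → ℤ := fun i => u i - if i ∈ W then 1 else 0 with hu'
      set v' : Fin n → ℤ := fun j => v j + if j ∈ N then 1 else 0 with hv'
      have hc' : ∀ i j, (A i j : ℤ) ≤ u' i + v' j := by
        intro i j
        by_cases hiW : i ∈ W
        · by_cases hjN : j ∈ N
          · simp only [hu', hv', hiW, hjN, if_pos]
            have := hc i j; omega
          · have hjt : j ∉ t i := fun hj => hjN (Finset.mem_biUnion.mpr ⟨i, hiW, hj⟩)
            have hne : (A i j : ℤ) ≠ u i + v j := by
              intro h; exact hjt (by rw [ht]; simp [h])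
            have := hc i j
            simp only [hu', hv', hiW, if_pos]
            by_cases hjN2 : j ∈ N
            · exact absurd hjN2 hjN
            · simp only [hjN, if_neg, not_false_iff]
              omega
        · have := hc i j
          simp only [hu', hv', hiW, if_neg, not_false_iff]
          by_cases hjN : j ∈ N <;> simp [hjN] <;> omega
      have hsum : ∑ i, u' i + ∑ j, v' j ≤ ∑ i, u i + ∑ j, v j - 1 := by
        have h1 : ∑ i, u' i = ∑ i, u i - #W := by
          rw [hu', Finset.sum_sub_distrib]
          congr 1
          rw [Finset.sum_ite_mem, univ_inter]
          simp
        have h2 : ∑ j, v' j = ∑ j, v j + #N := by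
          rw [hv', Finset.sum_add_distrib]
          congr 1
          rw [Finset.sum_ite_mem, univ_inter]
          simp
        have : (#N : ℤ) < #W := by exact_mod_cast hW
        omega
      exact ih u' v' hc' (by push_cast at hle ⊢; omega)


section lower
variable (n q r l : ℕ)

lemma r_lt_l (hq : 1 ≤ q) (hr1 : 0 < r) (hbig : 2 * r + r * q < n)
    (h1 : r * n ≤ q * l ^ 2 + 2 * l * r) : r < l := by
  by_contra hc
  push_neg at hc
  have e1 : q * l ^ 2 ≤ q * r ^ 2 := Nat.mul_le_mul_left q (Nat.pow_le_pow_left hc 2)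
  have e2 : 2 * l * r ≤ 2 * r * r := Nat.mul_le_mul_right r (by omega)
  have e3 : r * (2 * r + r * q) < r * n := mul_lt_mul_of_pos_left hbig hr1
  nlinarith

lemma two_l_le (hq : 1 ≤ q) (hr1 : 0 < r) (hl2 : 2 ≤ l)
    (hmin : ∀ l' : ℕ, l' < l →
      ¬(r * n ≤ q * l' ^ 2 + 2 * l' * r ∨ r * n ≤ q * l' ^ 2 + l' * (2 * r + q) + r)) :
    2 * l ≤ n + 1 := by
  have h := hmin (l - 1) (by omega)
  push_neg at h
  have h1 := h.1
  by_contra hc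
  push_neg at hc
  obtain ⟨l1, rfl⟩ : ∃ l1, l = l1 + 1 := ⟨l - 1, by omega⟩
  simp only [Nat.add_sub_cancel] at h1
  have hn : n ≤ 2 * l1 := by omega
  have hl1 : 1 ≤ l1 := by omega
  nlinarith

lemma lower_bound (hq : 1 ≤ q) (hr1 : 0 < r) (hr2 : r < n) (hbig : 2 * r + r * q < n)
    (hmin : ∀ l' : ℕ, l' < l →
      ¬(r * n ≤ q * l' ^ 2 + 2 * l' * r ∨ r * n ≤ q * l' ^ 2 + l' * (2 * r + q) + r))
    (h1 : r * n ≤ q * l ^ 2 + 2 * l * r)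
    (A : Fin n → Fin n → ℕ) (hA : IsDSM (n * q + r) n A) :
    q * n + 2 * l ≤ tdet A := by
  classical
  have hrl : r < l := r_lt_l n q r l hq hr1 hbig h1
  have hl2 : 2 ≤ l := by omega
  have h2l : 2 * l ≤ n + 1 := two_l_le n q r l hq hr1 hl2 hmin
  have hn0 : 0 < n := by omega
  by_contra hcon
  push_neg at hcon
  -- get a cover
  obtain ⟨u, v, hcov, htot⟩ := exists_cover A
  -- normalize: subtract min of v
  haveI : Nonempty (Fin n) := ⟨⟨0, hn0⟩⟩
  obtain ⟨j0, -, hj0⟩ := Finset.exists_min_image univ v ⟨⟨0, hn0⟩, mem_univ _⟩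
  set u' : Fin n → ℤ := fun i => u i + v j0 with hu'
  set v' : Fin n → ℤ := fun j => v j - v j0 with hv'
  have hcov' : ∀ i j, (A i j : ℤ) ≤ u' i + v' j := by
    intro i j; have := hcov i j; simp only [hu', hv']; omega
  have hv'nonneg : ∀ j, 0 ≤ v' j := fun j => by
    have := hj0 j (mem_univ j); simp only [hv']; omega
  have hv'j0 : v' j0 = 0 := by simp [hv']
  set U := ∑ i, u' i with hU
  set V := ∑ j, v' j with hV
  have hsum_eq : U + V = ∑ i, u i + ∑ j, v j := by
    simp only [hU, hV, hu', hv', Finset.sum_add_distrib, Finset.sum_sub_distrib]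
    ring
  have htdet : (tdet A : ℤ) ≤ (q * n : ℤ) + 2 * l - 1 := by
    have : (tdet A : ℤ) < (q*n : ℤ) + 2*l := by exact_mod_cast hcon
    omega
  have hUV : U + V ≤ (q*n : ℤ) + 2*l - 1 := by rw [hsum_eq]; omega
  have hVnn : 0 ≤ V := Finset.sum_nonneg fun j _ => hv'nonneg j
  -- column j0 gives U ≥ m
  have hUm : (n*q + r : ℤ) ≤ U := by
    have hcol : ∑ i, (A i j0 : ℤ) = (n*q + r : ℤ) := by
      rw [← Nat.cast_sum, hA.2 j0]; push_cast; ring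
    calc (n*q + r : ℤ) = ∑ i, (A i j0 : ℤ) := hcol.symm
      _ ≤ ∑ i, u' i := Finset.sum_le_sum fun i _ => by
          have := hcov' i j0; rw [hv'j0] at this; omega
      _ = U := rfl
  have hVle : V ≤ 2*l - 1 - r := by
    have := mul_comm (n:ℤ) (q:ℤ); linarith
  -- each u' i ≥ q
  have hu'q : ∀ i, (q : ℤ) ≤ u' i := by
    intro i
    have hrow : ∑ j, (A i j : ℤ) = (n*q + r : ℤ) := by
      rw [← Nat.cast_sum, hA.1 i]; push_cast; ring
    have : (n*q + r : ℤ) ≤ n * u' i + V := by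
      rw [← hrow]
      calc ∑ j, (A i j : ℤ) ≤ ∑ j, (u' i + v' j) :=
            Finset.sum_le_sum fun j _ => hcov' i j
        _ = n * u' i + V := by
            rw [Finset.sum_add_distrib, Finset.sum_const, card_univ]
            simp [hV, mul_comm]
    have hnq : (n : ℤ) * (q - 1) < n * u' i := by
      have h2ln : (2*l : ℤ) ≤ n + 1 := by exact_mod_cast h2l
      have hrz : (1 : ℤ) ≤ r := by exact_mod_cast hr1
      nlinarith
    have := (mul_lt_mul_iff_right₀ (by exact_mod_cast hn0 : (0:ℤ) < n)).mp hnq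
    omega
  set b : Fin n → ℤ := fun i => u' i - q with hb
  have hbnn : ∀ i, 0 ≤ b i := fun i => by have := hu'q i; simp [hb]; omega
  set B := ∑ i, b i with hB
  have hBU : B = U - n * q := by
    simp [hB, hb, Finset.sum_sub_distrib, hU, mul_comm]
  have hBV : B + V ≤ 2*l - 1 := by
    rw [hBU]; have := mul_comm (n:ℤ) (q:ℤ); linarith
  set S := univ.filter (fun i => 1 ≤ b i) with hS
  set T := univ.filter (fun j => 1 ≤ v' j) with hT
  set s := #S with hs
  set t := #T with ht
  have hsB : (s : ℤ) ≤ B := by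
    calc (s : ℤ) = ∑ _i ∈ S, (1 : ℤ) := by simp [hs]
      _ ≤ ∑ i ∈ S, b i := Finset.sum_le_sum fun i hi => (Finset.mem_filter.mp hi).2
      _ ≤ ∑ i, b i := Finset.sum_le_sum_of_subset_of_nonneg (Finset.subset_univ S)
          (fun i _ _ => hbnn i)
  have htV : (t : ℤ) ≤ V := by
    calc (t : ℤ) = ∑ _j ∈ T, (1 : ℤ) := by simp [ht]
      _ ≤ ∑ j ∈ T, v' j := Finset.sum_le_sum fun j hj => (Finset.mem_filter.mp hj).2
      _ ≤ ∑ j, v' j := Finset.sum_le_sum_of_subset_of_nonneg (Finset.subset_univ T)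
          (fun j _ _ => hv'nonneg j)
  have hbzero : ∀ i ∉ S, b i = 0 := by
    intro i hi
    simp only [hS, Finset.mem_filter, mem_univ, true_and, not_le] at hi
    have := hbnn i; omega
  have hvzero : ∀ j ∉ T, v' j = 0 := by
    intro j hj
    simp only [hT, Finset.mem_filter, mem_univ, true_and, not_le] at hj
    have := hv'nonneg j; omega
  -- block inequality
  have hblock : ∀ j ∈ Tᶜ, ((q:ℤ) * s + r) ≤ ∑ i ∈ S, (A i j : ℤ) := by
    intro j hj
    have hvj : v' j = 0 := hvzero j (by simpa using hj)
    have hcol : ∑ i, (A i j : ℤ) = (n*q + r : ℤ) := by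
      rw [← Nat.cast_sum, hA.2 j]; push_cast; ring
    have hsplit : ∑ i, (A i j : ℤ) = ∑ i ∈ S, (A i j : ℤ) + ∑ i ∈ Sᶜ, (A i j : ℤ) :=
      (Finset.sum_add_sum_compl S _).symm
    have hSc : ∑ i ∈ Sᶜ, (A i j : ℤ) ≤ (n - s) * q := by
      have hcard : #(Sᶜ) = n - s := by
        rw [Finset.card_compl, Fintype.card_fin]
      calc ∑ i ∈ Sᶜ, (A i j : ℤ) ≤ ∑ i ∈ Sᶜ, (q : ℤ) := Finset.sum_le_sum fun i hi => by
            have hib : b i = 0 := hbzero i (by simpa using hi)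
            have := hcov' i j
            simp only [hb] at hib
            omega
        _ = (n - s : ℕ) * q := by rw [Finset.sum_const, hcard]; push_cast; ring
        _ = ((n:ℤ) - s) * q := by
            have : s ≤ n := by rw [hs]; exact (Finset.card_le_univ S).trans (by simp)
            push_cast [Nat.cast_sub this]; ring
    have hsn : (s:ℤ) ≤ n := by
      have : s ≤ n := by rw [hs]; exact (Finset.card_le_univ S).trans (by simp)
      exact_mod_cast this
    have hexp : ((n:ℤ)-s)*q = (n:ℤ)*q - (q:ℤ)*s := by ring
    linarith [hsplit, hcol, hSc, hexp]
  have htn : t ≤ n := by rw [ht]; exact (Finset.card_le_univ T).trans (by simp)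
  have hsn : s ≤ n := by rw [hs]; exact (Finset.card_le_univ S).trans (by simp)
  -- summing over Tᶜ
  have hTc : #(Tᶜ) = n - t := by rw [Finset.card_compl, Fintype.card_fin]
  have hmain : ((n:ℤ) - t) * ((q:ℤ) * s + r) ≤ (s:ℤ) * (n*q + r) := by
    calc ((n:ℤ) - t) * ((q:ℤ)*s + r) = ∑ _j ∈ Tᶜ, ((q:ℤ)*s + r) := by
          rw [Finset.sum_const, hTc, nsmul_eq_mul, Nat.cast_sub htn]
      _ ≤ ∑ j ∈ Tᶜ, ∑ i ∈ S, (A i j : ℤ) := Finset.sum_le_sum hblock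
      _ = ∑ i ∈ S, ∑ j ∈ Tᶜ, (A i j : ℤ) := Finset.sum_comm
      _ ≤ ∑ i ∈ S, ∑ j, (A i j : ℤ) := Finset.sum_le_sum fun i _ =>
          Finset.sum_le_sum_of_subset_of_nonneg (Finset.subset_univ _)
            (fun j _ _ => by positivity)
      _ = (s:ℤ) * (n*q + r) := by
          have hrows : ∀ i ∈ S, ∑ j, (A i j : ℤ) = ((n*q + r : ℕ) : ℤ) := fun i _ => by
            rw [← Nat.cast_sum, hA.1 i]
          rw [Finset.sum_congr rfl hrows, Finset.sum_const, nsmul_eq_mul]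
          push_cast; ring
  -- conclude: r*n ≤ q*s*t + r*(s+t)
  have hkey : (r:ℤ) * n ≤ (q:ℤ)*s*t + r*(s+t) := by nlinarith [hmain]
  have hst : (s:ℤ) + t ≤ 2*l - 1 := by
    calc (s:ℤ) + t ≤ B + V := add_le_add hsB htV
      _ ≤ 2*l - 1 := hBV
  -- to ℕ
  have hstn : s + t + 1 ≤ 2 * l := by
    have h' : ((s:ℤ)) + t + 1 ≤ 2*l := by linarith
    exact_mod_cast h'
  have hkeyn : r * n ≤ q*s*t + r*(s+t) := by exact_mod_cast hkey
  -- contradiction with hmin (l-1)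
  obtain ⟨l1, rfl⟩ : ∃ l1, l = l1 + 1 := ⟨l - 1, by omega⟩
  have hmin1 := hmin l1 (by omega)
  push_neg at hmin1
  have h2' := hmin1.2
  have hst2 : s + t ≤ 2*l1 + 1 := by omega
  have hstZ : (s:ℤ) + t ≤ 2*(l1:ℤ) + 1 := by exact_mod_cast hst2
  have hprodZ : (s:ℤ)*t ≤ (l1:ℤ)^2 + l1 := by nlinarith [sq_nonneg ((s:ℤ)-t), sq_nonneg ((s:ℤ)+t)]
  have hprod : s * t ≤ l1^2 + l1 := by exact_mod_cast hprodZ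
  have hfin : r * n ≤ q * l1^2 + l1 * (2*r + q) + r := by
    calc r * n ≤ q*s*t + r*(s+t) := hkeyn
      _ ≤ q*(l1^2 + l1) + r*(2*l1+1) := by
          have e1 : q*s*t ≤ q*(l1^2+l1) := by
            rw [mul_assoc]; exact Nat.mul_le_mul_left q hprod
          have e2 : r*(s+t) ≤ r*(2*l1+1) := Nat.mul_le_mul_left r hst2
          omega
      _ = q * l1^2 + l1 * (2*r + q) + r := by ring
  exact (not_le.mpr h2') hfin
end lower



namespace HC

def Kv (n r l : ℕ) : ℕ := r * (n - l)
def pv (n r l : ℕ) : ℕ := Kv n r l % l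
def tv (n q r l : ℕ) : ℕ := q * l ^ 2 + 2 * l * r - r * n
def bv (n q r l : ℕ) : ℕ := tv n q r l / l ^ 2
def t'v (n q r l : ℕ) : ℕ := tv n q r l % l ^ 2
def Wv (n q r l : ℕ) : ℕ := t'v n q r l / l
def Rv (n q r l : ℕ) : ℕ := t'v n q r l % l
def mrow (n q r l i : ℕ) : ℕ :=
  Wv n q r l + (if (i + (l - pv n r l)) % l < Rv n q r l then 1 else 0)
def Gv (n q r l i : ℕ) : ℕ := ∑ i' ∈ Finset.range i, mrow n q r l i'
def indv (r l j' x : ℕ) : ℕ := if (x + (l - (j' * r) % l)) % l < r then 1 else 0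
def Fv (n q r l I J : ℕ) : ℕ :=
  if I < l then
    (if J < l then
      bv n q r l + (if (J + (l - (pv n r l + Gv n q r l I) % l)) % l < mrow n q r l I
        then 1 else 0)
    else q + indv r l (J - l) I)
  else (if J < l then q + indv r l (I - l) J else q)

section main
variable {n q r l : ℕ}

lemma facts (hq : 1 ≤ q) (hr1 : 0 < r) (hrl : r < l) (hln : l < n)
    (h1 : r * n ≤ q * l ^ 2 + 2 * l * r) :
    tv n q r l + Kv n r l = l * (q * l + r) := by
  have h2 : tv n q r l + r * n = q * l ^ 2 + 2 * l * r := by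
    unfold tv; omega
  have h3 : Kv n r l + r * l = r * n := by
    unfold Kv
    have : n - l + l = n := by omega
    calc r * (n - l) + r * l = r * ((n - l) + l) := by ring
      _ = r * n := by rw [this]
  have e1 : l * (q * l + r) = q * l ^ 2 + l * r := by ring
  have e2 : 2 * l * r = l * r + l * r := by ring
  have e3 : r * l = l * r := by ring
  omega

lemma tv_lt (hrl : r < l) (hl0 : 0 < l) : tv n q r l < (q + 2) * l ^ 2 := by
  have h2 : tv n q r l ≤ q * l ^ 2 + 2 * l * r := by unfold tv; omega
  have h3 : 2 * l * r < 2 * l ^ 2 := by nlinarith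
  have e : (q + 2) * l ^ 2 = q * l ^ 2 + 2 * l ^ 2 := by ring
  omega

lemma bv_le (hrl : r < l) (hl0 : 0 < l) : bv n q r l ≤ q + 1 := by
  have h := tv_lt (n := n) (q := q) hrl hl0
  have hpos : 0 < l ^ 2 := by positivity
  have : tv n q r l / l ^ 2 < q + 2 := Nat.div_lt_of_lt_mul (by linarith [h, mul_comm ((q+2)) (l^2)])
  unfold bv; omega

lemma t'v_lt (hl0 : 0 < l) : t'v n q r l < l ^ 2 := Nat.mod_lt _ (by positivity)

lemma Wv_lt (hl0 : 0 < l) : Wv n q r l < l := by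
  have h := t'v_lt (n := n) (q := q) (r := r) hl0
  unfold Wv
  exact Nat.div_lt_of_lt_mul (by nlinarith)

lemma Rv_lt (hl0 : 0 < l) : Rv n q r l < l := Nat.mod_lt _ hl0

lemma pv_lt (hl0 : 0 < l) : pv n r l < l := Nat.mod_lt _ hl0

lemma mrow_le (hl0 : 0 < l) : ∀ i, mrow n q r l i ≤ l := by
  intro i
  have h := Wv_lt (n := n) (q := q) (r := r) hl0
  unfold mrow
  split_ifs <;> omega

lemma Gl_eq (hl0 : 0 < l) : Gv n q r l l = t'v n q r l := by
  unfold Gv mrow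
  rw [Finset.sum_add_distrib, Finset.sum_const, Finset.card_range, smul_eq_mul,
    sum_shift_indicator l (Rv n q r l) (l - pv n r l) hl0 (le_of_lt (Rv_lt hl0))]
  have := Nat.div_add_mod (t'v n q r l) l
  unfold Wv Rv at *
  omega

-- dichotomy for R + p
lemma Rp_dich (hq : 1 ≤ q) (hr1 : 0 < r) (hrl : r < l) (hln : l < n)
    (h1 : r * n ≤ q * l ^ 2 + 2 * l * r) :
    (pv n r l = 0 ∧ Rv n q r l = 0) ∨
    (0 < pv n r l ∧ Rv n q r l + pv n r l = l) := by
  have hl0 : 0 < l := by omega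
  have hf := facts hq hr1 hrl hln h1
  have hmod0 : (tv n q r l + Kv n r l) % l = 0 := by
    rw [hf]; exact Nat.mul_mod_right l _
  have hRt : Rv n q r l = tv n q r l % l := by
    unfold Rv t'v
    exact Nat.mod_mod_of_dvd _ ⟨l, by ring⟩
  have hadd : (tv n q r l % l + Kv n r l % l) % l = 0 := by
    rw [← Nat.add_mod]; exact hmod0
  have hR : tv n q r l % l < l := Nat.mod_lt _ hl0
  have hp : Kv n r l % l < l := Nat.mod_lt _ hl0
  obtain ⟨k, hk⟩ := Nat.dvd_of_mod_eq_zero hadd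
  have hkle : k ≤ 1 := by
    by_contra hc
    have : 2 * l ≤ l * k := by
      calc 2 * l = l * 2 := by ring
        _ ≤ l * k := Nat.mul_le_mul_left l (by omega)
    omega
  unfold pv
  interval_cases k <;> omega

-- the master identity
lemma master (hq : 1 ≤ q) (hr1 : 0 < r) (hrl : r < l) (hln : l < n)
    (h1 : r * n ≤ q * l ^ 2 + 2 * l * r) :
    ∀ I, I < l → bv n q r l * l + mrow n q r l I + (Kv n r l / l
      + (if I < pv n r l then 1 else 0)) = q * l + r := by
  intro I hI
  have hl0 : 0 < l := by omega
  have hf := facts hq hr1 hrl hln h1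
  have hdich := Rp_dich hq hr1 hrl hln h1
  have hb : l ^ 2 * bv n q r l + t'v n q r l = tv n q r l := Nat.div_add_mod _ _
  have hW : l * Wv n q r l + Rv n q r l = t'v n q r l := Nat.div_add_mod _ _
  have hKdm : l * (Kv n r l / l) + pv n r l = Kv n r l := Nat.div_add_mod _ _
  have expand : l * (bv n q r l * l + Wv n q r l + Kv n r l / l)
      = l ^ 2 * bv n q r l + l * Wv n q r l + l * (Kv n r l / l) := by ring
  rcases hdich with ⟨hp0, hR0⟩ | ⟨hppos, hRp⟩
  · -- p = 0, R = 0
    have hE : l * (bv n q r l * l + Wv n q r l + Kv n r l / l) = l * (q * l + r) := by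
      omega
    have hE2 : bv n q r l * l + Wv n q r l + Kv n r l / l = q * l + r :=
      Nat.eq_of_mul_eq_mul_left hl0 hE
    have hmr : mrow n q r l I = Wv n q r l := by
      unfold mrow; rw [hR0]; simp
    rw [hmr, if_neg (by omega)]
    omega
  · -- p > 0, R + p = l
    have hE : l * (bv n q r l * l + Wv n q r l + Kv n r l / l + 1) = l * (q * l + r) := by
      have expand2 : l * (bv n q r l * l + Wv n q r l + Kv n r l / l + 1)
          = l ^ 2 * bv n q r l + l * Wv n q r l + l * (Kv n r l / l) + l := by ring
      omega
    have hE2 : bv n q r l * l + Wv n q r l + Kv n r l / l + 1 = q * l + r :=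
      Nat.eq_of_mul_eq_mul_left hl0 hE
    have hmr : mrow n q r l I
        = Wv n q r l + (if pv n r l ≤ I then 1 else 0) := by
      unfold mrow
      congr 1
      rcases Nat.lt_or_ge I (pv n r l) with hc | hc
      · rw [if_neg, if_neg (by omega)]
        rw [Nat.mod_eq_of_lt (by omega)]
        omega
      · rw [if_pos, if_pos hc]
        rw [show I + (l - pv n r l) = (I - pv n r l) + l by omega,
          Nat.add_mod_right, Nat.mod_eq_of_lt (by omega)]
        omega
    rw [hmr]
    split_ifs <;> omega

lemma Nsum (hr1 : 0 < r) (hrl : r < l) (hl0 : 0 < l) :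
    ∀ x, x < l → ∑ j' ∈ Finset.range (n - l), indv r l j' x
      = Kv n r l / l + (if x < pv n r l then 1 else 0) := by
  intro x hx
  have hpre : ∀ j' : ℕ, (∑ _i' ∈ Finset.range j', r) = j' * r := by
    intro j'; rw [Finset.sum_const, Finset.card_range, smul_eq_mul]
  calc ∑ j' ∈ Finset.range (n - l), indv r l j' x
      = ∑ j' ∈ Finset.range (n - l), ∑ d ∈ Finset.range r,
          (if ((∑ _i' ∈ Finset.range j', r) + d) % l = x then 1 else 0) := by
        refine Finset.sum_congr rfl fun j' _ => ?_
        rw [hpre j']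
        exact indicator_count l hl0 (j' * r) r x (le_of_lt hrl) hx
    _ = ∑ s ∈ Finset.range (∑ _i' ∈ Finset.range (n - l), r),
          (if s % l = x then 1 else 0) :=
        sum_blocks (fun _ => r) (fun s => if s % l = x then 1 else 0) (n - l)
    _ = ∑ s ∈ Finset.range (Kv n r l), (if s % l = x then 1 else 0) := by
        rw [hpre (n - l)]
        unfold Kv
        rw [mul_comm]
    _ = Kv n r l / l + (if x < Kv n r l % l then 1 else 0) :=
        count_res l hl0 x hx (Kv n r l)
    _ = Kv n r l / l + (if x < pv n r l then 1 else 0) := rfl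

lemma colM (hl0 : 0 < l) :
    ∀ J, J < l → ∑ I ∈ Finset.range l,
      (if (J + (l - (pv n r l + Gv n q r l I) % l)) % l < mrow n q r l I then 1 else 0)
      = mrow n q r l J := by
  intro J hJ
  calc ∑ I ∈ Finset.range l,
      (if (J + (l - (pv n r l + Gv n q r l I) % l)) % l < mrow n q r l I then 1 else 0)
      = ∑ I ∈ Finset.range l, ∑ d ∈ Finset.range (mrow n q r l I),
          (if (pv n r l + ((∑ i' ∈ Finset.range I, mrow n q r l i') + d)) % l = J
            then 1 else 0) := by
        refine Finset.sum_congr rfl fun I _ => ?_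
        rw [indicator_count l hl0 (pv n r l + Gv n q r l I) (mrow n q r l I) J
          (mrow_le hl0 I) hJ]
        refine Finset.sum_congr rfl fun d _ => ?_
        unfold Gv
        rw [add_assoc]
    _ = ∑ s ∈ Finset.range (∑ i' ∈ Finset.range l, mrow n q r l i'),
          (if (pv n r l + s) % l = J then 1 else 0) :=
        sum_blocks (fun i => mrow n q r l i) (fun s => if (pv n r l + s) % l = J then 1 else 0) l
    _ = ∑ s ∈ Finset.range (t'v n q r l), (if (pv n r l + s) % l = J then 1 else 0) := by
        have := Gl_eq (n := n) (q := q) (r := r) hl0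
        unfold Gv at this
        rw [this]
    _ = ∑ s ∈ Finset.range (t'v n q r l),
          (if s % l = (J + (l - pv n r l)) % l then 1 else 0) :=
        Finset.sum_congr rfl fun s _ => by
          exact if_congr (res_shift l hl0 (pv n r l) J s (pv_lt hl0) hJ) rfl rfl
    _ = t'v n q r l / l + (if (J + (l - pv n r l)) % l < t'v n q r l % l then 1 else 0) :=
        count_res l hl0 _ (Nat.mod_lt _ hl0) (t'v n q r l)
    _ = mrow n q r l J := rfl

lemma sum_split (hln : l ≤ n) (f : ℕ → ℕ) :
    ∑ J ∈ Finset.range n, f J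
      = ∑ J ∈ Finset.range l, f J + ∑ j' ∈ Finset.range (n - l), f (l + j') := by
  conv_lhs => rw [Finset.range_eq_Ico]
  rw [← Finset.sum_Ico_consecutive f (Nat.zero_le l) hln, ← Finset.range_eq_Ico,
    Finset.sum_Ico_eq_sum_range]

lemma hnq (hln : l < n) : l * q + (n - l) * q = n * q := by
  have h : l + (n - l) = n := by omega
  calc l * q + (n - l) * q = (l + (n - l)) * q := by ring
    _ = n * q := by rw [h]

lemma row_sum (hq : 1 ≤ q) (hr1 : 0 < r) (hrl : r < l) (hln : l < n)
    (h1 : r * n ≤ q * l ^ 2 + 2 * l * r) :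
    ∀ I, I < n → ∑ J ∈ Finset.range n, Fv n q r l I J = n * q + r := by
  intro I hIn
  have hl0 : 0 < l := by omega
  rw [sum_split (le_of_lt hln) (Fv n q r l I)]
  rcases Nat.lt_or_ge I l with hI | hI
  · have hleft : ∑ J ∈ Finset.range l, Fv n q r l I J
        = l * bv n q r l + mrow n q r l I := by
      have : ∀ J ∈ Finset.range l, Fv n q r l I J
          = bv n q r l + (if (J + (l - (pv n r l + Gv n q r l I) % l)) % l
              < mrow n q r l I then 1 else 0) := by
        intro J hJ
        rw [Finset.mem_range] at hJ
        unfold Fv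
        rw [if_pos hI, if_pos hJ]
      rw [Finset.sum_congr rfl this, Finset.sum_add_distrib, Finset.sum_const,
        Finset.card_range, smul_eq_mul,
        sum_shift_indicator l (mrow n q r l I) _ hl0 (mrow_le hl0 I)]
    have hright : ∑ j' ∈ Finset.range (n - l), Fv n q r l I (l + j')
        = (n - l) * q + (Kv n r l / l + (if I < pv n r l then 1 else 0)) := by
      have : ∀ j' ∈ Finset.range (n - l), Fv n q r l I (l + j')
          = q + indv r l j' I := by
        intro j' _
        unfold Fv
        rw [if_pos hI, if_neg (by omega), Nat.add_sub_cancel_left]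
      rw [Finset.sum_congr rfl this, Finset.sum_add_distrib, Finset.sum_const,
        Finset.card_range, smul_eq_mul, Nsum hr1 hrl hl0 I hI]
    rw [hleft, hright]
    have hmaster := master hq hr1 hrl hln h1 I hI
    have hq1 := hnq (q := q) hln
    have e1 : l * bv n q r l = bv n q r l * l := by ring
    have e2 : q * l = l * q := by ring
    omega
  · have hleft : ∑ J ∈ Finset.range l, Fv n q r l I J = l * q + r := by
      have : ∀ J ∈ Finset.range l, Fv n q r l I J = q + indv r l (I - l) J := by
        intro J hJ
        rw [Finset.mem_range] at hJ
        unfold Fv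
        rw [if_neg (by omega), if_pos hJ]
      rw [Finset.sum_congr rfl this, Finset.sum_add_distrib, Finset.sum_const,
        Finset.card_range, smul_eq_mul]
      unfold indv
      rw [sum_shift_indicator l r _ hl0 (le_of_lt hrl)]
    have hright : ∑ j' ∈ Finset.range (n - l), Fv n q r l I (l + j') = (n - l) * q := by
      have : ∀ j' ∈ Finset.range (n - l), Fv n q r l I (l + j') = q := by
        intro j' _
        unfold Fv
        rw [if_neg (by omega), if_neg (by omega)]
      rw [Finset.sum_congr rfl this, Finset.sum_const, Finset.card_range, smul_eq_mul]
    rw [hleft, hright]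
    have hq1 := hnq (q := q) hln
    omega

lemma col_sum (hq : 1 ≤ q) (hr1 : 0 < r) (hrl : r < l) (hln : l < n)
    (h1 : r * n ≤ q * l ^ 2 + 2 * l * r) :
    ∀ J, J < n → ∑ I ∈ Finset.range n, Fv n q r l I J = n * q + r := by
  intro J hJn
  have hl0 : 0 < l := by omega
  rw [sum_split (le_of_lt hln) (fun I => Fv n q r l I J)]
  rcases Nat.lt_or_ge J l with hJ | hJ
  · have hleft : ∑ I ∈ Finset.range l, Fv n q r l I J
        = l * bv n q r l + mrow n q r l J := by
      have hterm : ∀ I ∈ Finset.range l, Fv n q r l I J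
          = bv n q r l + (if (J + (l - (pv n r l + Gv n q r l I) % l)) % l
              < mrow n q r l I then 1 else 0) := by
        intro I hI
        rw [Finset.mem_range] at hI
        unfold Fv
        rw [if_pos hI, if_pos hJ]
      rw [Finset.sum_congr rfl hterm, Finset.sum_add_distrib, Finset.sum_const,
        Finset.card_range, smul_eq_mul, colM hl0 J hJ]
    have hright : ∑ i' ∈ Finset.range (n - l), Fv n q r l (l + i') J
        = (n - l) * q + (Kv n r l / l + (if J < pv n r l then 1 else 0)) := by
      have hterm : ∀ i' ∈ Finset.range (n - l), Fv n q r l (l + i') J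
          = q + indv r l i' J := by
        intro i' _
        unfold Fv
        rw [if_neg (by omega), if_pos hJ, Nat.add_sub_cancel_left]
      rw [Finset.sum_congr rfl hterm, Finset.sum_add_distrib, Finset.sum_const,
        Finset.card_range, smul_eq_mul, Nsum hr1 hrl hl0 J hJ]
    rw [hleft, hright]
    have hmaster := master hq hr1 hrl hln h1 J hJ
    have hq1 := hnq (q := q) hln
    have e1 : l * bv n q r l = bv n q r l * l := by ring
    have e2 : q * l = l * q := by ring
    omega
  · have hleft : ∑ I ∈ Finset.range l, Fv n q r l I J = l * q + r := by
      have hterm : ∀ I ∈ Finset.range l, Fv n q r l I J = q + indv r l (J - l) I := by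
        intro I hI
        rw [Finset.mem_range] at hI
        unfold Fv
        rw [if_pos hI, if_neg (by omega)]
      rw [Finset.sum_congr rfl hterm, Finset.sum_add_distrib, Finset.sum_const,
        Finset.card_range, smul_eq_mul]
      unfold indv
      rw [sum_shift_indicator l r _ hl0 (le_of_lt hrl)]
    have hright : ∑ i' ∈ Finset.range (n - l), Fv n q r l (l + i') J = (n - l) * q := by
      have hterm : ∀ i' ∈ Finset.range (n - l), Fv n q r l (l + i') J = q := by
        intro i' _
        unfold Fv
        rw [if_neg (by omega), if_neg (by omega)]
      rw [Finset.sum_congr rfl hterm, Finset.sum_const, Finset.card_range, smul_eq_mul]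
    rw [hleft, hright]
    have hq1 := hnq (q := q) hln
    omega

lemma construction (hq : 1 ≤ q) (hr1 : 0 < r) (hrl : r < l) (hln : l < n)
    (h1 : r * n ≤ q * l ^ 2 + 2 * l * r) :
    ∃ A : Fin n → Fin n → ℕ, IsDSM (n * q + r) n A ∧
      ∀ i j : Fin n, A i j ≤ q + ((if (i : ℕ) < l then 1 else 0)
        + (if (j : ℕ) < l then 1 else 0)) := by
  have hl0 : 0 < l := by omega
  refine ⟨fun i j => Fv n q r l i j, ⟨?_, ?_⟩, ?_⟩
  · intro i
    rw [Fin.sum_univ_eq_sum_range (fun J => Fv n q r l i J) n]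
    exact row_sum hq hr1 hrl hln h1 i i.isLt
  · intro j
    rw [Fin.sum_univ_eq_sum_range (fun I => Fv n q r l I j) n]
    exact col_sum hq hr1 hrl hln h1 j j.isLt
  · intro i j
    have hb := bv_le (n := n) (q := q) hrl hl0
    show Fv n q r l i j ≤ _
    unfold Fv indv
    split_ifs <;> omega

end main
end HC

/-- Hard case (2): m = nq + r, q ≥ 1, 0 < r < n, n > 2r + rq; l the smallest nonnegative
integer satisfying (1) q·l² + 2lr - rn ≥ 0 or (2) q·l² + l(2r+q) + r - rn ≥ 0.
If l satisfies both (1) and (2), then L(m,n) = qn + 2l. -/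
theorem hard_case_two (m n q r l : ℕ) (hq : 1 ≤ q)
    (hm : m = n * q + r) (hr1 : 0 < r) (hr2 : r < n) (hbig : 2 * r + r * q < n)
    (hl : r * n ≤ q * l ^ 2 + 2 * l * r ∨ r * n ≤ q * l ^ 2 + l * (2 * r + q) + r)
    (hmin : ∀ l' : ℕ, l' < l →
      ¬(r * n ≤ q * l' ^ 2 + 2 * l' * r ∨ r * n ≤ q * l' ^ 2 + l' * (2 * r + q) + r))
    (h1 : r * n ≤ q * l ^ 2 + 2 * l * r)
    (h2 : r * n ≤ q * l ^ 2 + l * (2 * r + q) + r) :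
    (∀ A : Fin n → Fin n → ℕ, IsDSM m n A → q * n + 2 * l ≤ tdet A) ∧
    (∃ A : Fin n → Fin n → ℕ, IsDSM m n A ∧ tdet A = q * n + 2 * l) := by
  subst hm
  have hrl : r < l := r_lt_l n q r l hq hr1 hbig h1
  have hl2 : 2 ≤ l := by omega
  have h2l : 2 * l ≤ n + 1 := two_l_le n q r l hq hr1 hl2 hmin
  have hln : l < n := by omega
  have hlow : ∀ A : Fin n → Fin n → ℕ, IsDSM (n * q + r) n A → q * n + 2 * l ≤ tdet A :=
    fun A hA => lower_bound n q r l hq hr1 hr2 hbig hmin h1 A hA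
  refine ⟨hlow, ?_⟩
  obtain ⟨A, hA, hcap⟩ := HC.construction hq hr1 hrl hln h1
  refine ⟨A, hA, le_antisymm ?_ (hlow A hA)⟩
  -- upper bound by the cover
  have hub : tdet A ≤ ∑ i : Fin n, (q + (if (i : ℕ) < l then 1 else 0))
      + ∑ j : Fin n, (if (j : ℕ) < l then 1 else 0) := by
    apply Finset.sup_le
    intro σ _
    calc ∑ i : Fin n, A i (σ i)
        ≤ ∑ i : Fin n, ((q + (if (i : ℕ) < l then 1 else 0))
            + (if ((σ i : ℕ)) < l then 1 else 0)) :=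
          Finset.sum_le_sum fun i _ => by have := hcap i (σ i); omega
      _ = ∑ i : Fin n, (q + (if (i : ℕ) < l then 1 else 0))
          + ∑ i : Fin n, (if ((σ i : ℕ)) < l then 1 else 0) := Finset.sum_add_distrib
      _ = ∑ i : Fin n, (q + (if (i : ℕ) < l then 1 else 0))
          + ∑ j : Fin n, (if (j : ℕ) < l then 1 else 0) := by
          rw [Equiv.sum_comp σ (fun j : Fin n => if (j : ℕ) < l then 1 else 0)]
  have hind : ∑ j : Fin n, (if (j : ℕ) < l then 1 else 0) = l := by
    rw [Fin.sum_univ_eq_sum_range (fun J => if J < l then 1 else 0) n, Finset.sum_boole]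
    have : (Finset.range n).filter (fun J => J < l) = Finset.range l := by
      ext x; simp only [Finset.mem_filter, Finset.mem_range]; omega
    rw [this, Finset.card_range]
    simp
  have hsum1 : ∑ i : Fin n, (q + (if (i : ℕ) < l then 1 else 0)) = n * q + l := by
    rw [Finset.sum_add_distrib, hind, Finset.sum_const, Finset.card_univ, Fintype.card_fin,
      smul_eq_mul]
  rw [hsum1, hind] at hub
  have : q * n = n * q := by ring
  omega
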